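/- Assume β ≥ 1. Then there exists a critical labor share r_c ∈ (0,1) such that for every r ∈ [r_c, 1) the drift field G(x) = (1−r)p(x) + rγ − x has exactly one zero in the closed simplex Δ. -/
import Mathlib


open scoped BigOperators
open scoped NNReal

lemma rpow_lip {β : ℝ} (hβ : 1 ≤ β) {a b : ℝ} (ha0 : 0 ≤ a) (ha1 : a ≤ 1)
    (hb0 : 0 ≤ b) (hb1 : b ≤ 1) : |a ^ β - b ^ β| ≤ β * |a - b| := by
  wlog hba : b ≤ a generalizing a b
  · rw [abs_sub_comm, abs_sub_comm a b]; exact this hb0 hb1 ha0 ha1 (le_of_not_ge hba)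
  rcases eq_or_lt_of_le hba with h | h
  · simp [h]
  · obtain ⟨c, hc, hc'⟩ := exists_hasDerivAt_eq_slope (fun t : ℝ => t ^ β)
      (fun t => β * t ^ (β - 1)) h
      (fun t _ => (Real.hasDerivAt_rpow_const (Or.inr hβ)).continuousAt.continuousWithinAt)
      (fun t _ => Real.hasDerivAt_rpow_const (Or.inr hβ))
    have hc0 : 0 ≤ c := le_of_lt (lt_of_le_of_lt hb0 hc.1)
    have hc1 : c ≤ 1 := le_of_lt (lt_of_lt_of_le hc.2 ha1)
    have hce : a ^ β - b ^ β = β * c ^ (β - 1) * (a - b) := by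
      rw [hc', div_mul_cancel₀]
      linarith
    rw [hce, abs_mul]
    have h1 : c ^ (β - 1) ≤ 1 := Real.rpow_le_one hc0 hc1 (by linarith)
    have h2 : 0 ≤ c ^ (β - 1) := Real.rpow_nonneg hc0 _
    have hb' : |β * c ^ (β - 1)| ≤ β := by
      rw [abs_of_nonneg (by positivity)]
      nlinarith
    exact mul_le_mul_of_nonneg_right hb' (abs_nonneg _)


/-- `p_i(x) = α_i x_i^β / (∑_j α_j x_j^β)` (real powers, `0^β = 0` for `β > 0`). -/
noncomputable def pF (A : ℕ) (α : Fin A → ℝ) (β : ℝ) (x : Fin A → ℝ) (i : Fin A) : ℝ :=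
  α i * x i ^ β / ∑ j, α j * x j ^ β

/-- The drift field `G(x) = (1-r) p(x) + r γ - x`. -/
noncomputable def GF (A : ℕ) (α : Fin A → ℝ) (β r : ℝ) (γ : Fin A → ℝ)
    (x : Fin A → ℝ) (i : Fin A) : ℝ :=
  (1 - r) * pF A α β x i + r * γ i - x i

/-- The closed simplex in `ℝ^A`. -/
def simplexF (A : ℕ) : Set (Fin A → ℝ) :=
  {x | (∀ i, 0 ≤ x i) ∧ ∑ i, x i = 1}

set_option maxHeartbeats 1000000 in
/-- for `β ≥ 1` there is a critical labor share `r_c ∈ (0,1)` such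
that for every `r ∈ [r_c, 1)` the drift field `G(x) = (1-r)p(x) + rγ - x` has
exactly one zero in the closed simplex. -/
theorem exists_critical_labor_share_unique_zero
    (A : ℕ) (hA : 2 ≤ A) (α : Fin A → ℝ) (hα : ∀ i, 0 < α i)
    (β : ℝ) (hβ : 1 ≤ β)
    (γ : Fin A → ℝ) (hγ : γ ∈ simplexF A) :
    ∃ rc : ℝ, 0 < rc ∧ rc < 1 ∧
      ∀ r : ℝ, rc ≤ r → r < 1 →
        ∃! x : Fin A → ℝ, x ∈ simplexF A ∧ GF A α β r γ x = 0 := by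
  haveI : Nonempty (Fin A) := ⟨⟨0, by omega⟩⟩
  have hβ0 : 0 < β := lt_of_lt_of_le one_pos hβ
  set T : ℝ := ∑ j, α j with hTdef
  have hT0 : 0 < T := Finset.sum_pos (fun i _ => hα i) Finset.univ_nonempty
  set m : ℝ := Finset.univ.inf' Finset.univ_nonempty α with hmdef
  have hm0 : 0 < m := by
    obtain ⟨i0, _, hi0⟩ := Finset.exists_mem_eq_inf' Finset.univ_nonempty α
    rw [hmdef, hi0]; exact hα i0
  have hA0 : (0:ℝ) < A := by positivity
  set c : ℝ := m * ((1:ℝ)/A) ^ β with hcdef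
  have hc0 : 0 < c := mul_pos hm0 (Real.rpow_pos_of_pos (by positivity) β)
  -- basic facts about simplex points
  have hx01 : ∀ x ∈ simplexF A, ∀ i, 0 ≤ x i ∧ x i ≤ 1 := by
    intro x hx i
    refine ⟨hx.1 i, ?_⟩
    calc x i ≤ ∑ j, x j := Finset.single_le_sum (fun j _ => hx.1 j) (Finset.mem_univ i)
    _ = 1 := hx.2
  -- denominator bounds
  have hS_lb : ∀ x ∈ simplexF A, c ≤ ∑ j, α j * x j ^ β := by
    intro x hx
    obtain ⟨j, _, hj⟩ := Finset.exists_le_of_sum_le (s := Finset.univ)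
      (f := fun _ : Fin A => (1:ℝ)/A) (g := x) Finset.univ_nonempty
      (by
        have h : ∑ _i : Fin A, (1:ℝ)/A = 1 := by
          rw [Finset.sum_const, Finset.card_univ, Fintype.card_fin, nsmul_eq_mul,
            mul_one_div, div_self (ne_of_gt hA0)]
        rw [h, hx.2])
    have h1 : ((1:ℝ)/A) ^ β ≤ x j ^ β := Real.rpow_le_rpow (by positivity) hj hβ0.le
    calc c ≤ α j * x j ^ β := by
          have := (hα j)
          have hmj : m ≤ α j := Finset.inf'_le α (Finset.mem_univ j)
          have h0 : (0:ℝ) ≤ ((1:ℝ)/A) ^ β := Real.rpow_nonneg (by positivity) β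
          nlinarith [Real.rpow_nonneg (hx.1 j) β]
    _ ≤ ∑ j, α j * x j ^ β := Finset.single_le_sum
          (fun k _ => mul_nonneg (hα k).le (Real.rpow_nonneg (hx.1 k) β)) (Finset.mem_univ j)
  have hS_pos : ∀ x ∈ simplexF A, 0 < ∑ j, α j * x j ^ β :=
    fun x hx => lt_of_lt_of_le hc0 (hS_lb x hx)
  have hS_ub : ∀ x ∈ simplexF A, ∑ j, α j * x j ^ β ≤ T := by
    intro x hx
    refine Finset.sum_le_sum fun j _ => ?_
    have h1 : x j ^ β ≤ 1 := Real.rpow_le_one (hx.1 j) (hx01 x hx j).2 hβ0.le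
    nlinarith [hα j, Real.rpow_nonneg (hx.1 j) β]
  -- coordinatewise distance
  have hd : ∀ (x y : Fin A → ℝ) (j : Fin A), |x j - y j| ≤ dist x y := by
    intro x y j
    rw [← Real.dist_eq]; exact dist_le_pi_dist x y j
  -- Lipschitz bound for the denominator
  have hS_lip : ∀ x ∈ simplexF A, ∀ y ∈ simplexF A,
      |(∑ j, α j * x j ^ β) - ∑ j, α j * y j ^ β| ≤ T * β * dist x y := by
    intro x hx y hy
    rw [← Finset.sum_sub_distrib]
    calc |∑ j, (α j * x j ^ β - α j * y j ^ β)| ≤ ∑ j, |α j * x j ^ β - α j * y j ^ β| :=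
          Finset.abs_sum_le_sum_abs _ _
    _ ≤ ∑ j, α j * (β * dist x y) := by
        refine Finset.sum_le_sum fun j _ => ?_
        rw [← mul_sub, abs_mul, abs_of_pos (hα j)]
        refine mul_le_mul_of_nonneg_left ?_ (hα j).le
        calc |x j ^ β - y j ^ β| ≤ β * |x j - y j| :=
              rpow_lip hβ (hx.1 j) (hx01 x hx j).2 (hy.1 j) (hx01 y hy j).2
        _ ≤ β * dist x y := mul_le_mul_of_nonneg_left (hd x y j) hβ0.le
    _ = T * (β * dist x y) := by rw [← Finset.sum_mul]
    _ = T * β * dist x y := by ring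
  -- Lipschitz bound for numerators
  have hN_lip : ∀ x ∈ simplexF A, ∀ y ∈ simplexF A, ∀ i,
      |α i * x i ^ β - α i * y i ^ β| ≤ T * β * dist x y := by
    intro x hx y hy i
    rw [← mul_sub, abs_mul, abs_of_pos (hα i)]
    have h1 : |x i ^ β - y i ^ β| ≤ β * |x i - y i| :=
      rpow_lip hβ (hx.1 i) (hx01 x hx i).2 (hy.1 i) (hx01 y hy i).2
    have h2 : |x i - y i| ≤ dist x y := hd x y i
    have hαT : α i ≤ T :=
      Finset.single_le_sum (fun k _ => (hα k).le) (Finset.mem_univ i)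
    calc α i * |x i ^ β - y i ^ β| ≤ α i * (β * dist x y) :=
          mul_le_mul_of_nonneg_left (h1.trans (mul_le_mul_of_nonneg_left h2 hβ0.le)) (hα i).le
    _ ≤ T * (β * dist x y) := mul_le_mul_of_nonneg_right hαT (by positivity)
    _ = T * β * dist x y := by ring
  set L : ℝ := 2 * T ^ 2 * β / c ^ 2 with hLdef
  have hL0 : 0 < L := by positivity
  -- Lipschitz bound for p, coordinatewise
  have hp_lip : ∀ x ∈ simplexF A, ∀ y ∈ simplexF A, ∀ i,
      |pF A α β x i - pF A α β y i| ≤ L * dist x y := by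
    intro x hx y hy i
    set Sx := ∑ j, α j * x j ^ β with hSx
    set Sy := ∑ j, α j * y j ^ β with hSy
    set Nx := α i * x i ^ β with hNx
    set Ny := α i * y i ^ β with hNy
    have hSx0 : 0 < Sx := hS_pos x hx
    have hSy0 : 0 < Sy := hS_pos y hy
    have key : pF A α β x i - pF A α β y i = (Nx * Sy - Ny * Sx) / (Sx * Sy) := by
      rw [pF, pF, ← hSx, ← hSy, ← hNx, ← hNy, div_sub_div _ _ hSx0.ne' hSy0.ne', mul_comm Sx Ny]
    have hNxT : Nx ≤ T := by
      have h1 : x i ^ β ≤ 1 := Real.rpow_le_one (hx.1 i) (hx01 x hx i).2 hβ0.le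
      have hαT : α i ≤ T :=
        Finset.single_le_sum (fun k _ => (hα k).le) (Finset.mem_univ i)
      rw [hNx]
      nlinarith [hα i, Real.rpow_nonneg (hx.1 i) β]
    have hNx0 : 0 ≤ Nx := mul_nonneg (hα i).le (Real.rpow_nonneg (hx.1 i) β)
    have h1 : |Sy - Sx| ≤ T * β * dist x y := by
      rw [abs_sub_comm]; exact hS_lip x hx y hy
    have h2 : |Nx - Ny| ≤ T * β * dist x y := hN_lip x hx y hy i
    have hSxT : Sx ≤ T := hS_ub x hx
    have hden : c ^ 2 ≤ Sx * Sy := by nlinarith [hS_lb x hx, hS_lb y hy]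
    clear_value Sx Sy Nx Ny
    rw [key, abs_div, abs_of_pos (mul_pos hSx0 hSy0)]
    have hnum : |Nx * Sy - Ny * Sx| ≤ 2 * T ^ 2 * β * dist x y := by
      have hid : Nx * Sy - Ny * Sx = Nx * (Sy - Sx) + Sx * (Nx - Ny) := by ring
      rw [hid]
      calc |Nx * (Sy - Sx) + Sx * (Nx - Ny)| ≤ |Nx * (Sy - Sx)| + |Sx * (Nx - Ny)| :=
            abs_add_le _ _
      _ = Nx * |Sy - Sx| + Sx * |Nx - Ny| := by
            rw [abs_mul, abs_mul, abs_of_nonneg hNx0, abs_of_pos hSx0]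
      _ ≤ T * (T * β * dist x y) + T * (T * β * dist x y) := by gcongr
      _ = 2 * T ^ 2 * β * dist x y := by ring
    calc |Nx * Sy - Ny * Sx| / (Sx * Sy) ≤ |Nx * Sy - Ny * Sx| / c ^ 2 := by
          apply div_le_div_of_nonneg_left (abs_nonneg _) (by positivity) hden
    _ ≤ (2 * T ^ 2 * β * dist x y) / c ^ 2 := by
          apply div_le_div_of_nonneg_right ?_ (by positivity)
          · exact hnum
    _ = L * dist x y := by rw [hLdef]; ring
  -- p maps simplex to simplex
  have hp_mem : ∀ x ∈ simplexF A, pF A α β x ∈ simplexF A := by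
    intro x hx
    constructor
    · intro i
      exact div_nonneg (mul_nonneg (hα i).le (Real.rpow_nonneg (hx.1 i) β)) (hS_pos x hx).le
    · rw [show (∑ i, pF A α β x i) = (∑ i, α i * x i ^ β) / (∑ j, α j * x j ^ β) by
        rw [Finset.sum_div]; rfl]
      exact div_self (hS_pos x hx).ne'
  -- choice of rc
  refine ⟨1 - 1 / (2 * (L + 1)), by
    have h1 : 1 / (2 * (L + 1)) < 1 := by
      rw [div_lt_one (by positivity)]; linarith
    linarith, by
    have h1 : 0 < 1 / (2 * (L + 1)) := by positivity
    linarith, ?_⟩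
  intro r hr hr1
  have hr0 : 0 < r := lt_of_lt_of_le (by
    have h1 : 0 < 1 / (2 * (L + 1)) := by positivity
    have h2 : 1 / (2 * (L + 1)) < 1 := by
      rw [div_lt_one (by positivity)]; linarith
    linarith) hr
  have h1r : 0 < 1 - r := by linarith
  have hKr : (1 - r) * L ≤ 1 / 2 := by
    have h1 : 1 - r ≤ 1 / (2 * (L + 1)) := by linarith
    have h2 : (1 - r) * L ≤ (1 / (2 * (L + 1))) * L :=
      mul_le_mul_of_nonneg_right h1 hL0.le
    have h3 : (1 / (2 * (L + 1))) * L ≤ 1 / 2 := by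
      rw [div_mul_eq_mul_div, div_le_div_iff₀ (by positivity) (by norm_num)]
      nlinarith
    linarith
  -- the simplex as a complete nonempty metric space
  have hclosed : IsClosed (simplexF A) := by
    have h1 : simplexF A = (⋂ i, {x : Fin A → ℝ | 0 ≤ x i}) ∩ {x | ∑ i, x i = 1} := by
      ext x; simp [simplexF, Set.mem_iInter]
    rw [h1]
    exact (isClosed_iInter fun i =>
      isClosed_le continuous_const (continuous_apply i)).inter
      (isClosed_eq (continuous_finset_sum _ fun i _ => continuous_apply i) continuous_const)
  haveI : Nonempty (simplexF A) := ⟨⟨γ, hγ⟩⟩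
  haveI : CompleteSpace (simplexF A) := hclosed.completeSpace_coe
  -- the map
  have hmemF : ∀ x ∈ simplexF A,
      (fun i => (1 - r) * pF A α β x i + r * γ i) ∈ simplexF A := by
    intro x hx
    constructor
    · intro i
      show 0 ≤ (1 - r) * pF A α β x i + r * γ i
      have h1 := (hp_mem x hx).1 i
      have h2 := hγ.1 i
      nlinarith
    · rw [Finset.sum_add_distrib, ← Finset.mul_sum, ← Finset.mul_sum,
        (hp_mem x hx).2, hγ.2]
      ring
  set f : simplexF A → simplexF A :=
    fun x => ⟨fun i => (1 - r) * pF A α β x.1 i + r * γ i, hmemF x.1 x.2⟩ with hfdef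
  have hlip : LipschitzWith (1/2 : ℝ≥0) f := by
    apply LipschitzWith.of_dist_le_mul
    intro x y
    rw [Subtype.dist_eq]
    have hhalf : ((1/2 : ℝ≥0) : ℝ) = 1/2 := by norm_num
    rw [hhalf]
    refine dist_pi_le_iff (by positivity) |>.2 fun i => ?_
    have hcoord : dist ((f x).1 i) ((f y).1 i)
        = (1 - r) * |pF A α β x.1 i - pF A α β y.1 i| := by
      rw [Real.dist_eq, hfdef]
      simp only
      rw [show ((1 - r) * pF A α β x.1 i + r * γ i) - ((1 - r) * pF A α β y.1 i + r * γ i)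
          = (1 - r) * (pF A α β x.1 i - pF A α β y.1 i) by ring, abs_mul, abs_of_pos h1r]
    rw [hcoord]
    have h1 := hp_lip x.1 x.2 y.1 y.2 i
    have h2 : dist x.1 y.1 = dist x y := (Subtype.dist_eq x y).symm
    calc (1 - r) * |pF A α β x.1 i - pF A α β y.1 i| ≤ (1 - r) * (L * dist x.1 y.1) :=
          mul_le_mul_of_nonneg_left h1 h1r.le
    _ = ((1 - r) * L) * dist x y := by rw [h2]; ring
    _ ≤ (1/2) * dist x y := mul_le_mul_of_nonneg_right hKr dist_nonneg
  have hctr : ContractingWith (1/2 : ℝ≥0) f := ⟨by rw [← NNReal.coe_lt_coe]; norm_num, hlip⟩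
  -- translate between G = 0 and fixed points
  have hGfix : ∀ x (hx : x ∈ simplexF A),
      (GF A α β r γ x = 0 ↔ f ⟨x, hx⟩ = ⟨x, hx⟩) := by
    intro x hx
    constructor
    · intro hG
      apply Subtype.ext
      funext i
      have := congrFun hG i
      rw [GF] at this
      simp only [Pi.zero_apply] at this
      simp only [hfdef]
      linarith
    · intro hf
      funext i
      have := congrFun (congrArg Subtype.val hf) i
      simp only [hfdef] at this
      rw [GF]
      simp only [Pi.zero_apply]
      linarith
  set z := ContractingWith.fixedPoint f hctr with hzdef
  refine ⟨z.1, ⟨z.2, ?_⟩, ?_⟩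
  · rw [hGfix z.1 z.2]
    have := hctr.fixedPoint_isFixedPt
    rw [Function.IsFixedPt] at this
    simpa [hzdef] using this
  · rintro y ⟨hy, hGy⟩
    have hfix : Function.IsFixedPt f ⟨y, hy⟩ := (hGfix y hy).1 hGy
    have := hctr.fixedPoint_unique hfix
    rw [← hzdef] at this
    exact congrArg Subtype.val this
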